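/- arXiv:1510.04931 — 3 statements merged into one kernel-verified Lean document; each statement's English description precedes it below -/
import Mathlib

section
/- (AIXI is stupid for some Υ, core construction.) Assume Γ_1 > 0, A has at least two elements, and there are percepts e⁰, e¹ ∈ E with r(e⁰) = 0 and r(e¹) = 1. Let ξ be any CCS, let π̂ be any policy (in particular, π̂ may be taken ξ-optimal), set a₁ := π̂(ϵ), and let ν be the CCS in which a first action equal to a₁ leads deterministically to e⁰ forever and any other first action leads deterministically to e¹ forever. For ε ∈ (0,1) define ξ' := (1−ε)·ν + ε·ξ. Then Υ_{ξ'}(π̂) ≤ ε, and every policy π with π(ϵ) ≠ a₁ satisfies Υ_{ξ'}(π) ≥ 1 − ε; in particular sup_π Υ_{ξ'}(π) ≥ 1 − ε. -/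
open scoped Classical

/-- A history: a finite alternating sequence of action–percept pairs. -/
abbrev Hist (A E : Type*) := List (A × E)

/-- A policy maps histories to actions. -/
abbrev Policy (A E : Type*) := Hist A E → A

/-- A chronological conditional semimeasure (CCS, environment):
values in `[0,1]`, and the chronological semimeasure condition. -/
structure CCS (A E : Type*) [Fintype E] where
  val : Hist A E → ℝ
  nonneg : ∀ h, 0 ≤ val h
  le_one : ∀ h, val h ≤ 1
  chrono : ∀ (h : Hist A E) (a : A), (∑ e : E, val (h ++ [(a, e)])) ≤ val h

/-- `Gam γ t = Γ_t = ∑_{i ≥ t} γ_i`, the discount normalization factor. -/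
noncomputable def Gam (γ : ℕ → ℝ) (t : ℕ) : ℝ := ∑' i : ℕ, γ (t + i)

/-- Extend a history by a list of percepts, with actions chosen by the policy `π`. -/
def extendH {A E : Type*} (π : Policy A E) : Hist A E → List E → Hist A E
  | h, [] => h
  | h, e :: es => extendH π (h ++ [(π h, e)]) es

/-- The value `V^π_ν(ae_{<t})` of policy `π` in environment `ν` given history `h = ae_{<t}`
(with `t = h.length + 1`); `0` whenever `Γ_t ≤ 0` or `ν(e_{<t} ∣ a_{<t}) ≤ 0`. -/
noncomputable def V {A E : Type*} [Fintype E] (γ : ℕ → ℝ) (r : E → ℝ)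
    (π : Policy A E) (ν : CCS A E) (h : Hist A E) : ℝ :=
  if 0 < Gam γ (h.length + 1) ∧ 0 < ν.val h then
    (1 / (Gam γ (h.length + 1) * ν.val h)) *
      ∑' n : ℕ, γ (h.length + 1 + n) *
        ∑ es : Fin (n + 1) → E,
          r (es (Fin.last n)) * ν.val (extendH π h (List.ofFn es))
  else 0

/-- The value `V^π_ν(h a)` of a history ending in the action `a`:
the action at time `t` is `a`, and `π` is followed from time `t+1` on. -/
noncomputable def Vact {A E : Type*} [Fintype E] (γ : ℕ → ℝ) (r : E → ℝ)
    (π : Policy A E) (ν : CCS A E) (h : Hist A E) (a : A) : ℝ :=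
  V γ r (fun h' => if h' = h then a else π h') ν h

/-- The optimal value `V^*_ν(h) = sup_π V^π_ν(h)`. -/
noncomputable def VOpt {A E : Type*} [Fintype E] (γ : ℕ → ℝ) (r : E → ℝ)
    (ν : CCS A E) (h : Hist A E) : ℝ :=
  ⨆ π : Policy A E, V γ r π ν h

/-- The optimal value `V^*_ν(h a)` of a history ending in an action. -/
noncomputable def VOptAct {A E : Type*} [Fintype E] (γ : ℕ → ℝ) (r : E → ℝ)
    (ν : CCS A E) (h : Hist A E) (a : A) : ℝ :=
  ⨆ π : Policy A E, Vact γ r π ν h a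

/-- A history is consistent with `π` iff each of its actions is the one chosen by `π`. -/
def Consistent {A E : Type*} (π : Policy A E) (h : Hist A E) : Prop :=
  ∀ (k : ℕ) (hk : k < h.length), (h.get ⟨k, hk⟩).1 = π (h.take k)

/-- The environment in which the first action decides everything: if the first action
is `α`, it deterministically emits `eSame` forever; otherwise `eOther` forever. -/
noncomputable def firstEnv {A E : Type*} (α : A) (eSame eOther : E) : Hist A E → ℝ
  | [] => 1
  | (a, e) :: rest =>
    if a = α then (if e = eSame ∧ ∀ p ∈ rest, p.2 = eSame then 1 else 0)
    else (if e = eOther ∧ ∀ p ∈ rest, p.2 = eOther then 1 else 0)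

section AIXIAux

variable {A E : Type*} [Fintype E]

private lemma extendH_append (π : Policy A E) :
    ∀ (l : List E) (h : Hist A E),
      ∃ t : Hist A E, extendH π h l = h ++ t ∧ t.map Prod.snd = l := by
  intro l
  induction l with
  | nil => exact fun h => ⟨[], by simp [extendH]⟩
  | cons e es ih =>
    intro h
    obtain ⟨t, ht, hm⟩ := ih (h ++ [(π h, e)])
    refine ⟨(π h, e) :: t, ?_, by simp [hm]⟩
    rw [show extendH π h (e :: es) = extendH π (h ++ [(π h, e)]) es from rfl, ht]
    simp

private lemma firstEnv_extendH (π : Policy A E) (α : A) (eS eO : E) (e : E) (l : List E) :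
    firstEnv α eS eO (extendH π [] (e :: l)) =
      if π [] = α then (if ∀ x ∈ e :: l, x = eS then (1 : ℝ) else 0)
      else (if ∀ x ∈ e :: l, x = eO then 1 else 0) := by
  obtain ⟨t, ht, hm⟩ := extendH_append π l [(π [], e)]
  have h1 : extendH π [] (e :: l) = (π [], e) :: t := by
    rw [show extendH π [] (e :: l) = extendH π ([] ++ [(π [], e)]) l from rfl]
    simpa using ht
  have hmem : ∀ c : E, (∀ p ∈ t, p.2 = c) ↔ (∀ x ∈ l, x = c) := by
    intro c
    rw [← hm]
    constructor
    · intro h x hx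
      obtain ⟨p, hp, rfl⟩ := List.mem_map.mp hx
      exact h p hp
    · intro h p hp
      exact h p.2 (List.mem_map_of_mem (f := Prod.snd) hp)
  rw [h1]
  simp only [firstEnv, List.forall_mem_cons, hmem]

private lemma sum_extendH_ofFn_le (μ : CCS A E) (π : Policy A E) :
    ∀ (n : ℕ) (h : Hist A E),
      (∑ es : Fin n → E, μ.val (extendH π h (List.ofFn es))) ≤ μ.val h := by
  intro n
  induction n with
  | zero =>
    intro h
    simp [extendH]
  | succ n ih =>
    intro h
    have key : ∀ es : Fin (n + 1) → E,
        extendH π h (List.ofFn es) =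
          extendH π (h ++ [(π h, es 0)]) (List.ofFn fun i : Fin n => es i.succ) := by
      intro es
      rw [List.ofFn_succ]
      rfl
    calc (∑ es : Fin (n + 1) → E, μ.val (extendH π h (List.ofFn es)))
        = ∑ p : E × (Fin n → E),
            μ.val (extendH π (h ++ [(π h, p.1)]) (List.ofFn p.2)) := by
          refine Fintype.sum_equiv ((Fin.consEquiv (fun _ : Fin (n + 1) => E)).symm) _ _ fun es => ?_
          rw [key es]
          rfl
      _ = ∑ e : E, ∑ f : Fin n → E,
            μ.val (extendH π (h ++ [(π h, e)]) (List.ofFn f)) := Fintype.sum_prod_type _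
      _ ≤ ∑ e : E, μ.val (h ++ [(π h, e)]) := Finset.sum_le_sum fun e _ => ih _
      _ ≤ μ.val h := μ.chrono h (π h)

end AIXIAux

/-- **AIXI is stupid for some Υ (core construction).** Rigging the mixture as
`ξ' = (1−ε)·ν + ε·ξ`, where `ν` sends the first action of `π̂` to hell and any
other first action to heaven, makes `π̂` score `≤ ε` while others score `≥ 1 − ε`. -/
theorem AIXI_is_stupid_for_some_intelligence {A E : Type*} [Fintype A] [Nonempty A] [Fintype E] [Nonempty E]
    (γ : ℕ → ℝ) (hγ0 : ∀ t, 0 ≤ γ t) (hγs : Summable γ)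
    (r : E → ℝ) (hr : ∀ e : E, 0 ≤ r e ∧ r e ≤ 1)
    (hΓ1 : 0 < Gam γ 1) (hA : ∃ a b : A, a ≠ b)
    (e0 e1 : E) (hr0 : r e0 = 0) (hr1 : r e1 = 1)
    (ξ : CCS A E) (πhat : Policy A E)
    (ε : ℝ) (hε0 : 0 < ε) (hε1 : ε < 1)
    (ν ξ' : CCS A E)
    (hν : ∀ h : Hist A E, ν.val h = firstEnv (πhat []) e0 e1 h)
    (hξ' : ∀ h : Hist A E, ξ'.val h = (1 - ε) * ν.val h + ε * ξ.val h) :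
    V γ r πhat ξ' [] ≤ ε ∧
    (∀ π : Policy A E, π [] ≠ πhat [] → 1 - ε ≤ V γ r π ξ' []) ∧
    1 - ε ≤ ⨆ π : Policy A E, V γ r π ξ' [] := by
  classical
  have hν_nil : ν.val [] = 1 := by rw [hν]; rfl
  have hξ'_nil : ξ'.val [] = (1 - ε) + ε * ξ.val [] := by rw [hξ' [], hν_nil]; ring
  have hξ'_pos : 0 < ξ'.val [] := by nlinarith [ξ.nonneg []]
  have hξ'_le_one : ξ'.val [] ≤ 1 := ξ'.le_one []
  have hξle : ξ.val [] ≤ ξ'.val [] := by nlinarith [ξ.le_one []]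
  have hsumγ : Summable (fun n : ℕ => γ (1 + n)) := by
    have := (summable_nat_add_iff 1).mpr hγs
    simpa [add_comm] using this
  have hGam1 : Gam γ 1 = ∑' n : ℕ, γ (1 + n) := rfl
  set S : CCS A E → Policy A E → ℕ → ℝ := fun μ π n =>
    ∑ es : Fin (n + 1) → E, r (es (Fin.last n)) * μ.val (extendH π [] (List.ofFn es))
    with hSdef
  have hS_nonneg : ∀ μ π n, 0 ≤ S μ π n := fun μ π n =>
    Finset.sum_nonneg fun es _ => mul_nonneg (hr _).1 (μ.nonneg _)
  have hS_le : ∀ μ π n, S μ π n ≤ μ.val [] := by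
    intro μ π n
    calc S μ π n ≤ ∑ es : Fin (n + 1) → E, μ.val (extendH π [] (List.ofFn es)) := by
          refine Finset.sum_le_sum fun es _ => ?_
          nlinarith [(hr (es (Fin.last n))).1, (hr (es (Fin.last n))).2,
            μ.nonneg (extendH π [] (List.ofFn es))]
      _ ≤ μ.val [] := sum_extendH_ofFn_le μ π (n + 1) []
  have hSummable : ∀ μ π, Summable (fun n => γ (1 + n) * S μ π n) := by
    intro μ π
    refine Summable.of_nonneg_of_le
      (fun n => mul_nonneg (hγ0 _) (hS_nonneg μ π n))
      (fun n => mul_le_of_le_one_right (hγ0 _) (le_trans (hS_le μ π n) (μ.le_one [])))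
      hsumγ
  have hV_eq : ∀ (π : Policy A E),
      V γ r π ξ' [] = (1 / (Gam γ 1 * ξ'.val [])) * ∑' n : ℕ, γ (1 + n) * S ξ' π n := by
    intro π
    simp only [V, List.length_nil, Nat.zero_add]
    rw [if_pos ⟨hΓ1, hξ'_pos⟩]
  have hfe : ∀ (π : Policy A E) (n : ℕ) (es : Fin (n + 1) → E),
      ν.val (extendH π [] (List.ofFn es)) =
        if π [] = πhat [] then (if ∀ i, es i = e0 then (1 : ℝ) else 0)
        else (if ∀ i, es i = e1 then 1 else 0) := by
    intro π n es
    rw [hν, List.ofFn_succ, firstEnv_extendH, ← List.ofFn_succ]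
    simp only [List.forall_mem_ofFn_iff]
  have hSν_hat : ∀ n, S ν πhat n = 0 := by
    intro n
    refine Finset.sum_eq_zero fun es _ => ?_
    rw [hfe, if_pos rfl]
    by_cases hc : ∀ i, es i = e0
    · rw [if_pos hc, mul_one, hc (Fin.last n), hr0]
    · rw [if_neg hc, mul_zero]
  have hSν_other : ∀ (π : Policy A E), π [] ≠ πhat [] → ∀ n, S ν π n = 1 := by
    intro π hπ n
    have hterm : ∀ es : Fin (n + 1) → E,
        r (es (Fin.last n)) * ν.val (extendH π [] (List.ofFn es)) =
          if es = (fun _ => e1) then (1 : ℝ) else 0 := by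
      intro es
      rw [hfe, if_neg hπ]
      by_cases hc : ∀ i, es i = e1
      · rw [if_pos hc, mul_one, hc (Fin.last n), hr1, if_pos (funext hc)]
      · rw [if_neg hc, mul_zero,
          if_neg (fun h => hc (fun i => by rw [h]))]
    calc S ν π n = ∑ es : Fin (n + 1) → E, if es = (fun _ => e1) then (1 : ℝ) else 0 :=
          Finset.sum_congr rfl fun es _ => hterm es
      _ = 1 := by
          rw [Finset.sum_ite_eq' Finset.univ (fun _ => e1) (fun _ => (1 : ℝ))]
          simp
  have hSξ' : ∀ π n, S ξ' π n = (1 - ε) * S ν π n + ε * S ξ π n := by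
    intro π n
    simp only [hSdef]
    rw [Finset.mul_sum, Finset.mul_sum, ← Finset.sum_add_distrib]
    refine Finset.sum_congr rfl fun es _ => ?_
    rw [hξ']
    ring
  have hD : 0 < Gam γ 1 * ξ'.val [] := mul_pos hΓ1 hξ'_pos
  -- Part 1
  have part1 : V γ r πhat ξ' [] ≤ ε := by
    rw [hV_eq πhat]
    have hT : (∑' n : ℕ, γ (1 + n) * S ξ' πhat n) ≤ Gam γ 1 * (ε * ξ.val []) := by
      calc (∑' n : ℕ, γ (1 + n) * S ξ' πhat n)
          ≤ ∑' n : ℕ, γ (1 + n) * (ε * ξ.val []) := by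
            refine Summable.tsum_le_tsum (fun n => ?_) (hSummable ξ' πhat) (hsumγ.mul_right _)
            refine mul_le_mul_of_nonneg_left ?_ (hγ0 _)
            rw [hSξ', hSν_hat]
            have h1 := hS_le ξ πhat n
            nlinarith [hS_nonneg ξ πhat n]
        _ = Gam γ 1 * (ε * ξ.val []) := by rw [tsum_mul_right, hGam1]
    calc (1 / (Gam γ 1 * ξ'.val [])) * ∑' n : ℕ, γ (1 + n) * S ξ' πhat n
        ≤ (1 / (Gam γ 1 * ξ'.val [])) * (Gam γ 1 * (ε * ξ.val [])) :=
          mul_le_mul_of_nonneg_left hT (by positivity)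
      _ ≤ ε := by
          rw [one_div, inv_mul_le_iff₀ hD]
          nlinarith [mul_nonneg (mul_nonneg hΓ1.le hε0.le) (sub_nonneg.mpr hξle)]
  -- Part 2
  have part2 : ∀ π : Policy A E, π [] ≠ πhat [] → 1 - ε ≤ V γ r π ξ' [] := by
    intro π hπ
    rw [hV_eq π]
    have hT : Gam γ 1 * (1 - ε) ≤ ∑' n : ℕ, γ (1 + n) * S ξ' π n := by
      calc Gam γ 1 * (1 - ε) = ∑' n : ℕ, γ (1 + n) * (1 - ε) := by
            rw [tsum_mul_right, hGam1]
        _ ≤ ∑' n : ℕ, γ (1 + n) * S ξ' π n := by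
            refine Summable.tsum_le_tsum (fun n => ?_) (hsumγ.mul_right _) (hSummable ξ' π)
            refine mul_le_mul_of_nonneg_left ?_ (hγ0 _)
            rw [hSξ', hSν_other π hπ]
            nlinarith [hS_nonneg ξ π n]
    have hstep : Gam γ 1 * ξ'.val [] * (1 - ε) ≤ ∑' n : ℕ, γ (1 + n) * S ξ' π n := by
      nlinarith [mul_nonneg (mul_nonneg hΓ1.le (by linarith : (0:ℝ) ≤ 1 - ε))
        (sub_nonneg.mpr hξ'_le_one)]
    calc 1 - ε = (1 / (Gam γ 1 * ξ'.val [])) * (Gam γ 1 * ξ'.val [] * (1 - ε)) := by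
          field_simp
      _ ≤ (1 / (Gam γ 1 * ξ'.val [])) * ∑' n : ℕ, γ (1 + n) * S ξ' π n :=
          mul_le_mul_of_nonneg_left hstep (by positivity)
  -- Part 3
  refine ⟨part1, part2, ?_⟩
  obtain ⟨a, b, hab⟩ := hA
  set π0 : Policy A E := fun _ => if a = πhat [] then b else a with hπ0def
  have hπ0 : π0 [] ≠ πhat [] := by
    by_cases h : a = πhat []
    · simp only [hπ0def, if_pos h]
      rw [← h]
      exact fun hb => hab hb.symm
    · simp only [hπ0def, if_neg h]
      exact h
  have hbdd : BddAbove (Set.range fun π : Policy A E => V γ r π ξ' []) := by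
    refine ⟨1, ?_⟩
    rintro x ⟨π, rfl⟩
    show V γ r π ξ' [] ≤ 1
    rw [hV_eq π]
    have hT : (∑' n : ℕ, γ (1 + n) * S ξ' π n) ≤ Gam γ 1 * ξ'.val [] := by
      calc (∑' n : ℕ, γ (1 + n) * S ξ' π n)
          ≤ ∑' n : ℕ, γ (1 + n) * ξ'.val [] :=
            Summable.tsum_le_tsum (fun n => mul_le_mul_of_nonneg_left (hS_le ξ' π n) (hγ0 _))
              (hSummable ξ' π) (hsumγ.mul_right _)
        _ = Gam γ 1 * ξ'.val [] := by rw [tsum_mul_right, hGam1]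
    calc (1 / (Gam γ 1 * ξ'.val [])) * ∑' n : ℕ, γ (1 + n) * S ξ' π n
        ≤ (1 / (Gam γ 1 * ξ'.val [])) * (Gam γ 1 * ξ'.val []) :=
          mul_le_mul_of_nonneg_left hT (by positivity)
      _ = 1 := by field_simp
  exact le_trans (part2 π0 hπ0) (le_ciSup hbdd π0)
end

section
/- (Any policy can be made nearly maximally intelligent, core construction.) Assume Γ_1 > 0 and e⁰ ∈ E with r(e⁰) = 0. Let ξ be a CCS with full support and π a policy such that V^π_ξ(h) > 0 for every history h consistent with π. Then for every ε > 0 there exists ε' ∈ (0,1] such that, with ν the π-dogmatic environment for ξ and ξ' := (1/2)·ν + (ε'/2)·ξ, the policy π is nearly ξ'-maximally intelligent: Υ_{ξ'}(π) > sup_{π̃} Υ_{ξ'}(π̃) − ε. -/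
open scoped Classical

/-- Auxiliary function for the dogmatic environment: `pre` is the consistent
prefix processed so far, the second argument is the rest of the history. -/
noncomputable def dogmaAux {A E : Type*} [Fintype E] (ξ : CCS A E) (π : Policy A E)
    (e0 : E) : Hist A E → Hist A E → ℝ
  | pre, [] => ξ.val pre
  | pre, (a, e) :: rest =>
    if a = π pre then dogmaAux ξ π e0 (pre ++ [(a, e)]) rest
    else if e = e0 ∧ ∀ p ∈ rest, p.2 = e0 then ξ.val pre else 0

/-- The `π`-dogmatic environment for `ξ`: mimics `ξ` while the actions follow `π`;
from the first deviation on it deterministically emits `e0` and freezes the mass. -/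
noncomputable def dogma {A E : Type*} [Fintype E] (ξ : CCS A E) (π : Policy A E)
    (e0 : E) (h : Hist A E) : ℝ :=
  dogmaAux ξ π e0 [] h

/-- A CCS has full support iff it is positive on every history. -/
def FullSupport {A E : Type*} [Fintype E] (ξ : CCS A E) : Prop :=
  ∀ h : Hist A E, 0 < ξ.val h

set_option linter.unusedSectionVars false

section Helpers

variable {A E : Type*} [Fintype E]

/-- The action–percept pairs appended by `extendH`. -/
def steps (π : Policy A E) : Hist A E → List E → Hist A E
  | _, [] => []
  | h, e :: es => (π h, e) :: steps π (h ++ [(π h, e)]) es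

theorem extendH_eq_steps (π : Policy A E) : ∀ (es : List E) (h : Hist A E),
    extendH π h es = h ++ steps π h es
  | [], h => by simp [extendH, steps]
  | e :: es, h => by
    simp only [extendH, steps]
    rw [extendH_eq_steps π es, List.append_assoc]
    rfl

theorem steps_map_snd (π : Policy A E) : ∀ (es : List E) (h : Hist A E),
    (steps π h es).map Prod.snd = es
  | [], h => rfl
  | e :: es, h => by simp [steps, steps_map_snd π es]

/-- On π-consistent continuations, the dogma auxiliary equals ξ. -/
theorem dogmaAux_consistent (ξ : CCS A E) (π : Policy A E) (e0 : E) :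
    ∀ (es : List E) (pre : Hist A E),
      dogmaAux ξ π e0 pre (steps π pre es) = ξ.val (extendH π pre es)
  | [], pre => by simp [steps, dogmaAux, extendH]
  | e :: es, pre => by
    simp only [steps, dogmaAux, if_pos rfl, extendH]
    exact dogmaAux_consistent ξ π e0 es _

theorem dogma_consistent (ξ : CCS A E) (π : Policy A E) (e0 : E) (es : List E) :
    dogma ξ π e0 (extendH π [] es) = ξ.val (extendH π [] es) := by
  conv_lhs => rw [extendH_eq_steps π es [], List.nil_append]
  exact dogmaAux_consistent ξ π e0 es []

/-- Key bound: a possibly-deviating path's reward-weighted dogma value is at most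
the corresponding π-path's ξ value. -/
theorem dogmaAux_key (ξ : CCS A E) (π : Policy A E) (e0 : E)
    (r : E → ℝ) (hr0 : r e0 = 0) (hr : ∀ e, 0 ≤ r e) (πt : Policy A E) :
    ∀ (l : List E) (e : E) (pre : Hist A E),
      r e * dogmaAux ξ π e0 pre (steps πt pre (l ++ [e])) ≤
        r e * ξ.val (extendH π pre (l ++ [e])) := by
  intro l
  induction l with
  | nil =>
    intro e pre
    by_cases hd : πt pre = π pre
    · simp [steps, dogmaAux, hd, extendH]
    · simp only [List.nil_append, steps, dogmaAux, if_neg hd]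
      by_cases he : e = e0
      · subst he; simp [hr0, mul_nonneg (hr _) (ξ.nonneg _)]
      · simp only [List.mem_nil_iff, false_implies, implies_true, and_true, if_neg he,
          mul_zero]
        exact mul_nonneg (hr _) (ξ.nonneg _)
  | cons e' l ih =>
    intro e pre
    by_cases hd : πt pre = π pre
    · simp only [List.cons_append, steps, dogmaAux, hd, if_pos rfl, extendH]
      exact ih e (pre ++ [(π pre, e')])
    · simp only [List.cons_append, steps, dogmaAux, if_neg hd]
      split
      · next hc =>
          have he : e = e0 := by
            have hm : e ∈ (steps πt (pre ++ [(πt pre, e')]) (l.append [e])).map Prod.snd := by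
              rw [steps_map_snd]
              simp [List.append_eq]
            obtain ⟨p, hp, hpe⟩ := List.mem_map.mp hm
            rw [← hpe]; exact hc.2 p hp
          subst he
          simp [hr0, mul_nonneg (hr _) (ξ.nonneg _)]
      · rw [mul_zero]
        exact mul_nonneg (hr _) (ξ.nonneg _)

/-- Iterated semimeasure bound: total ξ-mass of all depth-m continuations is ≤ ξ(h). -/
theorem sum_paths_le (ξ : CCS A E) (πt : Policy A E) :
    ∀ (m : ℕ) (h : Hist A E),
      ∑ es : Fin m → E, ξ.val (extendH πt h (List.ofFn es)) ≤ ξ.val h := by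
  intro m
  induction m with
  | zero => intro h; simp [extendH]
  | succ m ih =>
    intro h
    calc ∑ es : Fin (m + 1) → E, ξ.val (extendH πt h (List.ofFn es))
        = ∑ p : E × (Fin m → E),
            ξ.val (extendH πt (h ++ [(πt h, p.1)]) (List.ofFn p.2)) := by
          rw [← Equiv.sum_comp (Fin.consEquiv fun _ => E)]
          refine Finset.sum_congr rfl fun p _ => ?_
          simp [Fin.consEquiv, List.ofFn_succ, extendH, Fin.cons_zero, Fin.cons_succ]
      _ = ∑ e : E, ∑ g : Fin m → E,
            ξ.val (extendH πt (h ++ [(πt h, e)]) (List.ofFn g)) := by rw [Fintype.sum_prod_type]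
      _ ≤ ∑ e : E, ξ.val (h ++ [(πt h, e)]) := Finset.sum_le_sum fun e _ => ih _
      _ ≤ ξ.val h := ξ.chrono h (πt h)

/-- Per-path key bound at the root. -/
theorem dogma_path_key (ξ : CCS A E) (π : Policy A E) (e0 : E)
    (r : E → ℝ) (hr0 : r e0 = 0) (hrnn : ∀ e, 0 ≤ r e) (πt : Policy A E)
    (n : ℕ) (es : Fin (n + 1) → E) :
    r (es (Fin.last n)) * dogma ξ π e0 (extendH πt [] (List.ofFn es)) ≤
      r (es (Fin.last n)) * ξ.val (extendH π [] (List.ofFn es)) := by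
  have h1 : List.ofFn es = (List.ofFn fun i => es i.castSucc) ++ [es (Fin.last n)] := by
    rw [List.ofFn_succ']
    simp [List.concat_eq_append]
  rw [h1, dogma]
  conv_lhs => rw [extendH_eq_steps πt _ [], List.nil_append]
  exact dogmaAux_key ξ π e0 r hr0 hrnn πt _ _ []

theorem V_nil (γ : ℕ → ℝ) (r : E → ℝ) (πt : Policy A E) (μ : CCS A E) :
    V γ r πt μ [] = if 0 < Gam γ 1 ∧ 0 < μ.val [] then
      (1 / (Gam γ 1 * μ.val [])) * ∑' n : ℕ, γ (1 + n) *
        ∑ es : Fin (n + 1) → E,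
          r (es (Fin.last n)) * μ.val (extendH πt [] (List.ofFn es))
    else 0 := by
  simp only [V, List.length_nil, zero_add]

theorem inner_nonneg (r : E → ℝ) (hrnn : ∀ e, 0 ≤ r e) (μ : CCS A E)
    (πt : Policy A E) (n : ℕ) :
    0 ≤ ∑ es : Fin (n + 1) → E,
      r (es (Fin.last n)) * μ.val (extendH πt [] (List.ofFn es)) :=
  Finset.sum_nonneg fun es _ => mul_nonneg (hrnn _) (μ.nonneg _)

theorem inner_le (r : E → ℝ) (hr1 : ∀ e, r e ≤ 1) (μ : CCS A E)
    (πt : Policy A E) (n : ℕ) :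
    (∑ es : Fin (n + 1) → E,
      r (es (Fin.last n)) * μ.val (extendH πt [] (List.ofFn es))) ≤ μ.val [] := by
  calc (∑ es : Fin (n + 1) → E,
        r (es (Fin.last n)) * μ.val (extendH πt [] (List.ofFn es)))
      ≤ ∑ es : Fin (n + 1) → E, μ.val (extendH πt [] (List.ofFn es)) :=
        Finset.sum_le_sum fun es _ => by
          have := mul_le_mul_of_nonneg_right (hr1 (es (Fin.last n))) (μ.nonneg
            (extendH πt [] (List.ofFn es)))
          linarith
    _ ≤ μ.val [] := sum_paths_le μ πt (n + 1) []

theorem gam_shift_summable (γ : ℕ → ℝ) (hγs : Summable γ) :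
    Summable fun n : ℕ => γ (1 + n) :=
  ((summable_nat_add_iff 1).mpr hγs).congr fun n => by rw [add_comm]

theorem num_summable (γ : ℕ → ℝ) (hγ0 : ∀ t, 0 ≤ γ t) (hγs : Summable γ)
    (r : E → ℝ) (hr : ∀ e : E, 0 ≤ r e ∧ r e ≤ 1) (μ : CCS A E) (πt : Policy A E) :
    Summable fun n : ℕ => γ (1 + n) * ∑ es : Fin (n + 1) → E,
      r (es (Fin.last n)) * μ.val (extendH πt [] (List.ofFn es)) := by
  refine Summable.of_nonneg_of_le
    (fun n => mul_nonneg (hγ0 _) (inner_nonneg r (fun e => (hr e).1) μ πt n))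
    (fun n => ?_) (gam_shift_summable γ hγs)
  have h1 := (inner_le r (fun e => (hr e).2) μ πt n).trans (μ.le_one [])
  calc γ (1 + n) * ∑ es : Fin (n + 1) → E,
        r (es (Fin.last n)) * μ.val (extendH πt [] (List.ofFn es))
      ≤ γ (1 + n) * 1 := mul_le_mul_of_nonneg_left h1 (hγ0 _)
    _ = γ (1 + n) := mul_one _

end Helpers

/-- **Any policy can be made nearly maximally intelligent (core construction).**
For a suitable `ε'`, under the dogmatic mixture `ξ' = (1/2)·ν + (ε'/2)·ξ` the policy
`π` is nearly `ξ'`-maximally intelligent. -/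
theorem computable_policies_can_be_smart {A E : Type*} [Fintype A] [Nonempty A] [Fintype E] [Nonempty E]
    (γ : ℕ → ℝ) (hγ0 : ∀ t, 0 ≤ γ t) (hγs : Summable γ)
    (r : E → ℝ) (hr : ∀ e : E, 0 ≤ r e ∧ r e ≤ 1)
    (hΓ1 : 0 < Gam γ 1)
    (e0 : E) (hr0 : r e0 = 0)
    (ξ : CCS A E) (hfs : FullSupport ξ)
    (π : Policy A E) (hπ : ∀ h : Hist A E, Consistent π h → 0 < V γ r π ξ h)
    (ε : ℝ) (hε : 0 < ε) :
    ∃ ε' : ℝ, 0 < ε' ∧ ε' ≤ 1 ∧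
      ∀ ν ξ' : CCS A E,
        (∀ h : Hist A E, ν.val h = dogma ξ π e0 h) →
        (∀ h : Hist A E, ξ'.val h = (1 / 2) * ν.val h + (ε' / 2) * ξ.val h) →
        (⨆ πt : Policy A E, V γ r πt ξ' []) - ε < V γ r π ξ' [] := by
  have hc : 0 < V γ r π ξ [] := hπ [] (fun k hk => absurd hk (by simp))
  set c := V γ r π ξ [] with hcdef
  refine ⟨min (ε / 2) 1, lt_min (by linarith) one_pos, min_le_right _ _, ?_⟩
  intro ν ξ' hν hξ'
  set ε' := min (ε / 2) 1 with hε'def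
  have hε'pos : 0 < ε' := lt_min (by linarith) one_pos
  have hε'le : ε' ≤ ε / 2 := min_le_left _ _
  have hξ0 : 0 < ξ.val [] := hfs []
  have hν0 : ν.val [] = ξ.val [] := by rw [hν]; rfl
  have hξ'0 : ξ'.val [] = ((1 + ε') / 2) * ξ.val [] := by rw [hξ' [], hν0]; ring
  have hξ'0pos : 0 < ξ'.val [] := by rw [hξ'0]; positivity
  have hpathπ : ∀ l : List E,
      ξ'.val (extendH π [] l) = ((1 + ε') / 2) * ξ.val (extendH π [] l) := by
    intro l; rw [hξ' _, hν _, dogma_consistent]; ring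
  set Nξ := ∑' n : ℕ, γ (1 + n) * ∑ es : Fin (n + 1) → E,
      r (es (Fin.last n)) * ξ.val (extendH π [] (List.ofFn es)) with hNξ
  have hcNξ : c = (1 / (Gam γ 1 * ξ.val [])) * Nξ := by
    rw [hcdef, V_nil, if_pos ⟨hΓ1, hξ0⟩]
  have hgs := gam_shift_summable γ hγs
  have hsum1 := num_summable γ hγ0 hγs r hr ξ π
  -- V^π under the mixture equals c
  have hVπ : V γ r π ξ' [] = c := by
    rw [V_nil, if_pos ⟨hΓ1, hξ'0pos⟩]
    have h1 : ∀ n : ℕ, γ (1 + n) * ∑ es : Fin (n + 1) → E,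
        r (es (Fin.last n)) * ξ'.val (extendH π [] (List.ofFn es)) =
        ((1 + ε') / 2) * (γ (1 + n) * ∑ es : Fin (n + 1) → E,
          r (es (Fin.last n)) * ξ.val (extendH π [] (List.ofFn es))) := by
      intro n
      have h2 : ∀ es : Fin (n + 1) → E,
          r (es (Fin.last n)) * ξ'.val (extendH π [] (List.ofFn es)) =
          ((1 + ε') / 2) * (r (es (Fin.last n)) * ξ.val (extendH π [] (List.ofFn es))) :=
        fun es => by rw [hpathπ]; ring
      rw [Finset.sum_congr rfl (fun es _ => h2 es), ← Finset.mul_sum]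
      ring
    rw [tsum_congr h1, tsum_mul_left, ← hNξ, hcNξ, hξ'0]
    have h3 : (1 : ℝ) + ε' ≠ 0 := by positivity
    have h4 : Gam γ 1 ≠ 0 := ne_of_gt hΓ1
    have h5 : ξ.val [] ≠ 0 := ne_of_gt hξ0
    field_simp
  -- upper bound for arbitrary policies
  have hub : ∀ πt : Policy A E, V γ r πt ξ' [] ≤ c + ε' := by
    intro πt
    rw [V_nil]
    split
    · next hcond =>
        have hterm : ∀ n : ℕ, γ (1 + n) * ∑ es : Fin (n + 1) → E,
            r (es (Fin.last n)) * ξ'.val (extendH πt [] (List.ofFn es)) ≤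
            (1 / 2) * (γ (1 + n) * ∑ es : Fin (n + 1) → E,
              r (es (Fin.last n)) * ξ.val (extendH π [] (List.ofFn es))) +
            (ε' / 2 * ξ.val []) * γ (1 + n) := by
          intro n
          have hA : (∑ es : Fin (n + 1) → E,
              r (es (Fin.last n)) * ν.val (extendH πt [] (List.ofFn es))) ≤
              ∑ es : Fin (n + 1) → E,
                r (es (Fin.last n)) * ξ.val (extendH π [] (List.ofFn es)) :=
            Finset.sum_le_sum fun es _ => by
              rw [hν]; exact dogma_path_key ξ π e0 r hr0 (fun e => (hr e).1) πt n es
          have hB := inner_le r (fun e => (hr e).2) ξ πt n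
          have hsplit : (∑ es : Fin (n + 1) → E,
              r (es (Fin.last n)) * ξ'.val (extendH πt [] (List.ofFn es))) =
              (1 / 2) * (∑ es : Fin (n + 1) → E,
                r (es (Fin.last n)) * ν.val (extendH πt [] (List.ofFn es))) +
              (ε' / 2) * ∑ es : Fin (n + 1) → E,
                r (es (Fin.last n)) * ξ.val (extendH πt [] (List.ofFn es)) := by
            rw [Finset.mul_sum, Finset.mul_sum, ← Finset.sum_add_distrib]
            exact Finset.sum_congr rfl fun es _ => by rw [hξ']; ring
          rw [hsplit]
          have hγn := hγ0 (1 + n)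
          nlinarith [mul_le_mul_of_nonneg_left hA hγn,
            mul_le_mul_of_nonneg_left hB hγn, hε'pos.le]
        have hsumL := num_summable γ hγ0 hγs r hr ξ' πt
        have hsumR : Summable (fun n : ℕ =>
            (1 / 2) * (γ (1 + n) * ∑ es : Fin (n + 1) → E,
              r (es (Fin.last n)) * ξ.val (extendH π [] (List.ofFn es))) +
            (ε' / 2 * ξ.val []) * γ (1 + n)) :=
          (hsum1.mul_left _).add (hgs.mul_left _)
        have hNle : (∑' n : ℕ, γ (1 + n) * ∑ es : Fin (n + 1) → E,
            r (es (Fin.last n)) * ξ'.val (extendH πt [] (List.ofFn es))) ≤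
            (1 / 2) * Nξ + (ε' / 2 * ξ.val []) * Gam γ 1 := by
          calc (∑' n : ℕ, γ (1 + n) * ∑ es : Fin (n + 1) → E,
              r (es (Fin.last n)) * ξ'.val (extendH πt [] (List.ofFn es)))
              ≤ ∑' n : ℕ, ((1 / 2) * (γ (1 + n) * ∑ es : Fin (n + 1) → E,
                  r (es (Fin.last n)) * ξ.val (extendH π [] (List.ofFn es))) +
                (ε' / 2 * ξ.val []) * γ (1 + n)) := Summable.tsum_le_tsum hterm hsumL hsumR
            _ = (1 / 2) * Nξ + (ε' / 2 * ξ.val []) * Gam γ 1 := by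
                rw [Summable.tsum_add (hsum1.mul_left _) (hgs.mul_left _), tsum_mul_left,
                  tsum_mul_left, ← hNξ]
                rfl
        have hNξval : Nξ = c * (Gam γ 1 * ξ.val []) := by
          rw [hcNξ]
          field_simp
        rw [one_div_mul_eq_div, div_le_iff₀ (mul_pos hΓ1 hξ'0pos)]
        have hexp : (c + ε') * (Gam γ 1 * ξ'.val []) =
            (c + ε') * ((1 + ε') / 2) * (Gam γ 1 * ξ.val []) := by rw [hξ'0]; ring
        rw [hexp]
        nlinarith [hNle, hNξval, mul_pos hΓ1 hξ0,
          mul_nonneg (mul_nonneg (add_pos hc hε'pos).le hε'pos.le)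
            (mul_pos hΓ1 hξ0).le]
    · next _ => linarith
  have hsup : (⨆ πt : Policy A E, V γ r πt ξ' []) ≤ c + ε' := ciSup_le hub
  rw [hVπ]
  linarith
end

section
/- (Intelligence is bounded away from 0 and 1.) Assume Γ_1 > 0 and there are percepts e⁰, e¹ ∈ E with r(e⁰) = 0 and r(e¹) = 1. Let M be a countable class of CCSs containing the heaven environment ν¹ (deterministically emitting e¹ at every step) and the hell environment ν⁰ (deterministically emitting e⁰ at every step), let w : M → ℝ satisfy w(ν) > 0 for all ν ∈ M and Σ_{ν ∈ M} w(ν) ≤ 1, and let ξ := Σ_{ν ∈ M} w(ν)·ν. Then for every policy π, w(ν¹) ≤ Υ_ξ(π) ≤ 1 − w(ν⁰); in particular 0 < Υ_ξ(π) < 1. -/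
open scoped Classical

/-- The deterministic environment always emitting the percept `e`. -/
noncomputable def detEnv {A E : Type*} (e : E) (h : Hist A E) : ℝ :=
  if ∀ p ∈ h, p.2 = e then 1 else 0


lemma extendH_map_snd {A E : Type*} (π : Policy A E) :
    ∀ (l : List E) (h : Hist A E), (extendH π h l).map Prod.snd = h.map Prod.snd ++ l
  | [], h => by simp [extendH]
  | e :: es, h => by
      rw [extendH, extendH_map_snd π es]
      simp

lemma mem_extendH_snd {A E : Type*} (π : Policy A E) (l : List E) (p : A × E)
    (hp : p ∈ extendH π [] l) : p.2 ∈ l := by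
  have h := extendH_map_snd π l []
  simp only [List.map_nil, List.nil_append] at h
  rw [← h]
  exact List.mem_map_of_mem hp

lemma sum_extendH_le {A E : Type*} [Fintype E] (π : Policy A E) (ν : CCS A E) :
    ∀ (n : ℕ) (h : Hist A E),
      (∑ es : Fin n → E, ν.val (extendH π h (List.ofFn es))) ≤ ν.val h
  | 0, h => by
      simp [extendH, Finset.sum_const]
  | n + 1, h => by
      have key : (∑ es : Fin (n+1) → E, ν.val (extendH π h (List.ofFn es)))
          = ∑ p : E × (Fin n → E),
              ν.val (extendH π (h ++ [(π h, p.1)]) (List.ofFn p.2)) := by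
        rw [← Equiv.sum_comp (Fin.consEquiv fun _ => E)
          (fun es => ν.val (extendH π h (List.ofFn es)))]
        apply Finset.sum_congr rfl
        intro p _
        simp [Fin.consEquiv, List.ofFn_succ, extendH]
      rw [key, Fintype.sum_prod_type]
      calc (∑ e : E, ∑ es : Fin n → E,
              ν.val (extendH π (h ++ [(π h, e)]) (List.ofFn es)))
          ≤ ∑ e : E, ν.val (h ++ [(π h, e)]) :=
            Finset.sum_le_sum fun e _ => sum_extendH_le π ν n (h ++ [(π h, e)])
        _ ≤ ν.val h := ν.chrono h (π h)

/-- **Intelligence is bounded away from 0 and 1.** If the class contains the heaven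
and hell environments, every policy's intelligence lies in `[w(ν¹), 1 − w(ν⁰)] ⊆ (0,1)`. -/
theorem intelligence_bounded {A E : Type*} [Fintype A] [Nonempty A] [Fintype E] [Nonempty E]
    (γ : ℕ → ℝ) (hγ0 : ∀ t, 0 ≤ γ t) (hγs : Summable γ)
    (r : E → ℝ) (hr : ∀ e : E, 0 ≤ r e ∧ r e ≤ 1)
    (hΓ1 : 0 < Gam γ 1)
    (e0 e1 : E) (hr0 : r e0 = 0) (hr1 : r e1 = 1)
    (M : Set (CCS A E)) (hMc : M.Countable)
    (ν0 ν1 : CCS A E) (hν0M : ν0 ∈ M) (hν1M : ν1 ∈ M)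
    (hν0 : ∀ h : Hist A E, ν0.val h = detEnv e0 h)
    (hν1 : ∀ h : Hist A E, ν1.val h = detEnv e1 h)
    (w : CCS A E → ℝ) (hwpos : ∀ ν ∈ M, 0 < w ν)
    (hws : Summable (fun ν : M => w ν)) (hw1 : (∑' ν : M, w ν) ≤ 1)
    (ξ : CCS A E)
    (hξ : ∀ h : Hist A E, ξ.val h = ∑' ν : M, w ν * (ν : CCS A E).val h)
    (π : Policy A E) :
    w ν1 ≤ V γ r π ξ [] ∧ V γ r π ξ [] ≤ 1 - w ν0 ∧
    0 < V γ r π ξ [] ∧ V γ r π ξ [] < 1 := by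
  classical
  -- mixture basics
  have hwnn : ∀ ν : M, 0 ≤ w ν := fun ν => (hwpos ν ν.2).le
  have hsum : ∀ h : Hist A E, Summable fun ν : M => w ν * (ν : CCS A E).val h := by
    intro h
    exact Summable.of_nonneg_of_le
      (fun ν => mul_nonneg (hwnn ν) ((ν : CCS A E).nonneg h))
      (fun ν => mul_le_of_le_one_right (hwnn ν) ((ν : CCS A E).le_one h)) hws
  have hterm : ∀ (h : Hist A E) (ν' : CCS A E), ν' ∈ M → w ν' * ν'.val h ≤ ξ.val h := by
    intro h ν' hν'
    rw [hξ h]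
    exact Summable.le_tsum (hsum h) ⟨ν', hν'⟩
      (fun ν _ => mul_nonneg (hwnn ν) ((ν : CCS A E).nonneg h))
  have hν1e : ν1.val [] = 1 := by simp [hν1, detEnv]
  have hν1le : w ν1 ≤ ξ.val [] := by
    have := hterm [] ν1 hν1M
    rwa [hν1e, mul_one] at this
  have hξ0pos : 0 < ξ.val [] := lt_of_lt_of_le (hwpos ν1 hν1M) hν1le
  have hξ0le : ξ.val [] ≤ 1 := ξ.le_one []
  -- the heaven environment gives value 1 on all-e1 histories
  have hdet1 : ∀ n : ℕ, ν1.val (extendH π [] (List.ofFn fun _ : Fin (n+1) => e1)) = 1 := by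
    intro n
    rw [hν1, detEnv, if_pos]
    intro p hp
    have := mem_extendH_snd π _ p hp
    rcases List.mem_ofFn.1 this with ⟨i, hi⟩
    exact hi.symm
  have hdet0 : ∀ n : ℕ, ν0.val (extendH π [] (List.ofFn fun _ : Fin (n+1) => e0)) = 1 := by
    intro n
    rw [hν0, detEnv, if_pos]
    intro p hp
    have := mem_extendH_snd π _ p hp
    rcases List.mem_ofFn.1 this with ⟨i, hi⟩
    exact hi.symm
  -- per-step reward sums
  have hTlb : ∀ n : ℕ, w ν1 ≤
      ∑ es : Fin (n+1) → E, r (es (Fin.last n)) * ξ.val (extendH π [] (List.ofFn es)) := by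
    intro n
    have h1 : w ν1 ≤ r ((fun _ : Fin (n+1) => e1) (Fin.last n)) *
        ξ.val (extendH π [] (List.ofFn fun _ : Fin (n+1) => e1)) := by
      calc w ν1 = w ν1 * ν1.val (extendH π [] (List.ofFn fun _ : Fin (n+1) => e1)) := by
              rw [hdet1, mul_one]
        _ ≤ ξ.val (extendH π [] (List.ofFn fun _ : Fin (n+1) => e1)) := hterm _ ν1 hν1M
        _ = _ := by rw [hr1, one_mul]
    exact le_trans h1 (Finset.single_le_sum
      (f := fun es : Fin (n+1) → E => r (es (Fin.last n)) * ξ.val (extendH π [] (List.ofFn es)))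
      (fun es _ => mul_nonneg (hr _).1 (ξ.nonneg _))
      (Finset.mem_univ (fun _ : Fin (n+1) => e1)))
  have hTub : ∀ n : ℕ,
      (∑ es : Fin (n+1) → E, r (es (Fin.last n)) * ξ.val (extendH π [] (List.ofFn es)))
        ≤ ξ.val [] - w ν0 := by
    intro n
    have hpt : ∀ es : Fin (n+1) → E,
        r (es (Fin.last n)) * ξ.val (extendH π [] (List.ofFn es))
          ≤ ξ.val (extendH π [] (List.ofFn es))
            - w ν0 * ν0.val (extendH π [] (List.ofFn es)) := by
      intro es
      by_cases h0 : ν0.val (extendH π [] (List.ofFn es)) = 0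
      · rw [h0, mul_zero, sub_zero]
        exact mul_le_of_le_one_left (ξ.nonneg _) (hr _).2
      · have hall : ∀ p ∈ extendH π [] (List.ofFn es), p.2 = e0 := by
          by_contra hcon
          apply h0
          rw [hν0, detEnv, if_neg hcon]
        have hv1 : ν0.val (extendH π [] (List.ofFn es)) = 1 := by
          rw [hν0, detEnv, if_pos hall]
        have hlastmem : es (Fin.last n) ∈ List.ofFn es := List.mem_ofFn.2 ⟨_, rfl⟩
        have hmap := extendH_map_snd π (List.ofFn es) []
        simp only [List.map_nil, List.nil_append] at hmap
        rw [← hmap] at hlastmem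
        rcases List.mem_map.1 hlastmem with ⟨p, hp, hps⟩
        have hlast : es (Fin.last n) = e0 := hps ▸ hall p hp
        rw [hlast, hr0, zero_mul, hv1, mul_one, sub_nonneg]
        have := hterm (extendH π [] (List.ofFn es)) ν0 hν0M
        rwa [hv1, mul_one] at this
    calc (∑ es : Fin (n+1) → E, r (es (Fin.last n)) * ξ.val (extendH π [] (List.ofFn es)))
        ≤ ∑ es : Fin (n+1) → E, (ξ.val (extendH π [] (List.ofFn es))
            - w ν0 * ν0.val (extendH π [] (List.ofFn es))) :=
          Finset.sum_le_sum fun es _ => hpt es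
      _ = (∑ es : Fin (n+1) → E, ξ.val (extendH π [] (List.ofFn es)))
            - w ν0 * ∑ es : Fin (n+1) → E, ν0.val (extendH π [] (List.ofFn es)) := by
          rw [Finset.sum_sub_distrib, Finset.mul_sum]
      _ ≤ ξ.val [] - w ν0 * 1 := by
          apply sub_le_sub (sum_extendH_le π ξ (n+1) [])
          apply mul_le_mul_of_nonneg_left _ (hwpos ν0 hν0M).le
          calc (1 : ℝ) = ν0.val (extendH π [] (List.ofFn fun _ : Fin (n+1) => e0)) :=
                (hdet0 n).symm
            _ ≤ _ := Finset.single_le_sum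
                (f := fun es : Fin (n+1) → E => ν0.val (extendH π [] (List.ofFn es)))
                (fun es _ => ν0.nonneg _) (Finset.mem_univ _)
      _ = ξ.val [] - w ν0 := by rw [mul_one]
  -- summability
  have hγs1 : Summable fun n => γ (1 + n) := by
    have := (summable_nat_add_iff 1).2 hγs
    simpa [add_comm] using this
  have hTnn : ∀ n : ℕ, 0 ≤
      ∑ es : Fin (n+1) → E, r (es (Fin.last n)) * ξ.val (extendH π [] (List.ofFn es)) :=
    fun n => Finset.sum_nonneg fun es _ => mul_nonneg (hr _).1 (ξ.nonneg _)
  have hTle1 : ∀ n : ℕ,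
      (∑ es : Fin (n+1) → E, r (es (Fin.last n)) * ξ.val (extendH π [] (List.ofFn es))) ≤ 1 :=
    fun n => le_trans (le_trans
      (Finset.sum_le_sum fun es _ => mul_le_of_le_one_left (ξ.nonneg _) (hr _).2)
      (sum_extendH_le π ξ (n+1) [])) hξ0le
  have hfs : Summable fun n => γ (1 + n) *
      ∑ es : Fin (n+1) → E, r (es (Fin.last n)) * ξ.val (extendH π [] (List.ofFn es)) :=
    Summable.of_nonneg_of_le (fun n => mul_nonneg (hγ0 _) (hTnn n))
      (fun n => mul_le_of_le_one_right (hγ0 _) (hTle1 n)) hγs1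
  have hGam1 : Gam γ 1 = ∑' n : ℕ, γ (1 + n) := rfl
  -- bounds on the value sum
  have hSlb : w ν1 * Gam γ 1 ≤ ∑' n : ℕ, γ (1 + n) *
      ∑ es : Fin (n+1) → E, r (es (Fin.last n)) * ξ.val (extendH π [] (List.ofFn es)) := by
    rw [hGam1, ← tsum_mul_left]
    refine Summable.tsum_le_tsum (fun n => ?_) (hγs1.mul_left _) hfs
    rw [mul_comm]
    exact mul_le_mul_of_nonneg_left (hTlb n) (hγ0 _)
  have hSub : (∑' n : ℕ, γ (1 + n) *
      ∑ es : Fin (n+1) → E, r (es (Fin.last n)) * ξ.val (extendH π [] (List.ofFn es)))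
        ≤ Gam γ 1 * (ξ.val [] - w ν0) := by
    rw [hGam1, ← tsum_mul_right]
    refine Summable.tsum_le_tsum (fun n => ?_) hfs (hγs1.mul_right _)
    exact mul_le_mul_of_nonneg_left (hTub n) (hγ0 _)
  -- unfold V
  have hcond : 0 < Gam γ (List.length ([] : Hist A E) + 1) ∧ 0 < ξ.val [] := by
    constructor
    · simpa using hΓ1
    · exact hξ0pos
  have hVeq : V γ r π ξ [] = (1 / (Gam γ 1 * ξ.val [])) * ∑' n : ℕ, γ (1 + n) *
      ∑ es : Fin (n+1) → E, r (es (Fin.last n)) * ξ.val (extendH π [] (List.ofFn es)) := by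
    rw [V, if_pos hcond]
    norm_num
  have hΓne : Gam γ 1 ≠ 0 := ne_of_gt hΓ1
  have hξne : ξ.val [] ≠ 0 := ne_of_gt hξ0pos
  have hinvpos : 0 < 1 / (Gam γ 1 * ξ.val []) := by positivity
  have hlow : w ν1 ≤ V γ r π ξ [] := by
    rw [hVeq]
    calc w ν1 ≤ w ν1 / ξ.val [] := by
          rw [le_div_iff₀ hξ0pos]
          exact mul_le_of_le_one_right (hwpos ν1 hν1M).le hξ0le
      _ = (1 / (Gam γ 1 * ξ.val [])) * (w ν1 * Gam γ 1) := by field_simp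
      _ ≤ _ := mul_le_mul_of_nonneg_left hSlb hinvpos.le
  have hhigh : V γ r π ξ [] ≤ 1 - w ν0 := by
    rw [hVeq]
    calc (1 / (Gam γ 1 * ξ.val [])) * (∑' n : ℕ, γ (1 + n) *
          ∑ es : Fin (n+1) → E, r (es (Fin.last n)) * ξ.val (extendH π [] (List.ofFn es)))
        ≤ (1 / (Gam γ 1 * ξ.val [])) * (Gam γ 1 * (ξ.val [] - w ν0)) :=
          mul_le_mul_of_nonneg_left hSub hinvpos.le
      _ = (ξ.val [] - w ν0) / ξ.val [] := by field_simp
      _ ≤ 1 - w ν0 := by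
          rw [div_le_iff₀ hξ0pos]
          nlinarith [mul_le_of_le_one_right (hwpos ν0 hν0M).le hξ0le]
  refine ⟨hlow, hhigh, lt_of_lt_of_le (hwpos ν1 hν1M) hlow, ?_⟩
  exact lt_of_le_of_lt hhigh (by linarith [hwpos ν0 hν0M])
end
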